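/- arXiv:1011.6082 — 2 statements merged into one kernel-verified Lean document; each statement's English description precedes it below -/
import Mathlib

section
/- With V(R) as above, the set min V(R) of minimal elements of (V(R), ⪯_{T⁺}) is a critical tope committee: Σ_{Q ∈ min V(R)} Q = T⁺, and no proper subset K ⊊ min V(R) satisfies Σ_{Q ∈ K} Q ≥ T⁺ coordinatewise. -/
open Finset

namespace Stmt13

lemma modlem (a n : ℕ) (hn : 0 < n) (h : a < 2*n) :
    a % n = if a < n then a else a - n := by
  split
  · exact Nat.mod_eq_of_lt ‹_›
  · rw [Nat.mod_eq_sub_mod (by omega)]; exact Nat.mod_eq_of_lt (by omega)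

variable {t : ℕ}

lemma val_natCast_lt (ht : 0 < t) (c : ℕ) (hc : c < 2*t) : ((c : ZMod (2*t))).val = c := by
  haveI : NeZero (2*t) := ⟨by omega⟩
  rw [ZMod.val_natCast, Nat.mod_eq_of_lt hc]

lemma cast_val_eq (ht : 0 < t) (u : ZMod (2*t)) : ((u.val : ℕ) : ZMod (2*t)) = u := by
  haveI : NeZero (2*t) := ⟨by omega⟩
  exact ZMod.natCast_rightInverse u

lemma val_lt' (ht : 0 < t) (u : ZMod (2*t)) : u.val < 2*t := by
  haveI : NeZero (2*t) := ⟨by omega⟩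
  exact ZMod.val_lt u

lemma helperB (ht : 0 < t) (u : ZMod (2*t)) (c : ℕ) (hc : c < 2*t) :
    (u + (c : ZMod (2*t))).val = if u.val + c < 2*t then u.val + c else u.val + c - 2*t := by
  haveI : NeZero (2*t) := ⟨by omega⟩
  rw [ZMod.val_add, val_natCast_lt ht c hc, modlem _ _ (by omega) (by have := val_lt' ht u; omega)]

lemma helperA (ht : 0 < t) (u v : ZMod (2*t)) :
    (u - v).val = if v.val ≤ u.val then u.val - v.val else u.val + 2*t - v.val := by
  haveI : NeZero (2*t) := ⟨by omega⟩
  have hv := val_lt' ht v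
  have hu := val_lt' ht u
  have h1 : u - v = (((u.val + (2*t - v.val)) : ℕ) : ZMod (2*t)) := by
    rw [Nat.cast_add, Nat.cast_sub hv.le, cast_val_eq ht u, cast_val_eq ht v, ZMod.natCast_self]
    ring
  rw [h1, ZMod.val_natCast, modlem _ _ (by omega) (by omega)]
  split_ifs <;> omega

lemma eq_of_val_eq (ht : 0 < t) {u v : ZMod (2*t)} (h : u.val = v.val) : u = v := by
  haveI : NeZero (2*t) := ⟨by omega⟩
  exact ZMod.val_injective _ h

/-- the tope associated to position `k` -/
noncomputable def Zf (a : Fin t → ZMod (2*t)) (k : ZMod (2*t)) : Fin t → ℝ :=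
  fun j => if 1 ≤ (k - a j).val ∧ (k - a j).val ≤ t then -1 else 1

lemma Zf_cases (a : Fin t → ZMod (2*t)) (k : ZMod (2*t)) (j : Fin t) :
    Zf a k j = -1 ∨ Zf a k j = 1 := by
  unfold Zf; split <;> simp

lemma Zf_neg_iff (a : Fin t → ZMod (2*t)) (k : ZMod (2*t)) (j : Fin t) :
    Zf a k j = -1 ↔ (1 ≤ (k - a j).val ∧ (k - a j).val ≤ t) := by
  by_cases h : (1 ≤ (k - a j).val ∧ (k - a j).val ≤ t) <;> simp [Zf, h] <;> norm_num


variable {a : Fin t → ZMod (2*t)}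

lemma tt_zero (ht : 0 < t) : ((t : ZMod (2*t))) + t = 0 := by
  have : ((t : ZMod (2*t))) + t = ((t + t : ℕ) : ZMod (2*t)) := by push_cast; ring
  rw [this, show t + t = 2*t by ring, ZMod.natCast_self]

lemma cover (ht : 0 < t) (hinj : Function.Injective a)
    (hanti : ∀ i j, a i ≠ a j + t) (x : ZMod (2*t)) :
    (∃ j, a j = x) ∨ (∃ j, a j = x + t) := by
  haveI : NeZero (2*t) := ⟨by omega⟩
  classical
  set b : Fin t ⊕ Fin t → ZMod (2*t) := Sum.elim a (fun j => a j + t) with hb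
  have hbinj : Function.Injective b := by
    rintro (i|i) (j|j) h <;> simp only [hb, Sum.elim_inl, Sum.elim_inr] at h
    · exact congrArg Sum.inl (hinj h)
    · exact absurd h (hanti i j)
    · exact absurd h.symm (hanti j i)
    · exact congrArg Sum.inr (hinj (add_right_cancel h))
  have hcard : Fintype.card (Fin t ⊕ Fin t) = Fintype.card (ZMod (2*t)) := by
    simp [ZMod.card]; ring
  have hbsurj : Function.Surjective b :=
    ((Fintype.bijective_iff_injective_and_card b).2 ⟨hbinj, hcard⟩).2
  obtain ⟨(j|j), hj⟩ := hbsurj x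
  · exact Or.inl ⟨j, hj⟩
  · right
    refine ⟨j, ?_⟩
    simp only [hb, Sum.elim_inr] at hj
    rw [← hj, add_assoc, tt_zero ht, add_zero]

lemma not_both (hanti : ∀ i j, a i ≠ a j + t) (x : ZMod (2*t))
    (h1 : ∃ j, a j = x) : ¬ (∃ j, a j = x + t) := by
  rintro ⟨j, hj⟩
  obtain ⟨i, hi⟩ := h1
  exact hanti j i (by rw [hj, hi])

lemma win_add_t (ht : 0 < t) (v : ZMod (2*t)) :
    (1 ≤ (v + t).val ∧ (v + t).val ≤ t) ↔ ¬(1 ≤ v.val ∧ v.val ≤ t) := by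
  have h := helperB ht v t (by omega)
  have h2 := val_lt' ht v
  rw [h]; split_ifs <;> omega

lemma Zf_add_t (ht : 0 < t) (k : ZMod (2*t)) : Zf a (k + t) = -(Zf a k) := by
  funext j
  have : k + t - a j = (k - a j) + t := by ring
  simp only [Zf, Pi.neg_apply, this]
  rcases (win_add_t ht (k - a j)) with ⟨h1, h2⟩
  by_cases h : (1 ≤ (k - a j).val ∧ (k - a j).val ≤ t)
  · rw [if_pos h, if_neg (by intro hc; exact (h1 hc) h)]; ring
  · rw [if_neg h, if_pos (h2 h)]

lemma neg_t_eq (ht : 0 < t) : -((t : ZMod (2*t))) = t :=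
  neg_eq_of_add_eq_zero_left (tt_zero ht)

lemma Zf_inj_core (ht : 0 < t) (hanti : ∀ i j, a i ≠ a j + t)
    (hcov : ∀ x : ZMod (2*t), (∃ j, a j = x) ∨ (∃ j, a j = x + t))
    (k m : ZMod (2*t)) (hd : 1 ≤ (m - k).val ∧ (m - k).val ≤ t) :
    Zf a m ≠ Zf a k := by
  intro hZ
  rcases hcov k with ⟨j, hj⟩ | ⟨j, hj⟩
  · have h1 : Zf a m j = -1 := by rw [Zf_neg_iff, hj]; exact hd
    have h2 : Zf a k j = 1 := by
      simp only [Zf, hj, sub_self]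
      rw [if_neg]; simp [ZMod.val_zero]
    rw [hZ, h2] at h1; norm_num at h1
  · have h1 : Zf a k j = -1 := by
      rw [Zf_neg_iff, hj]
      have hkt : k - (k + t) = ((t : ℕ) : ZMod (2*t)) := by
        linear_combination (-1 : ZMod (2*t)) * tt_zero ht
      rw [hkt, val_natCast_lt ht t (by omega)]
      omega
    have h2 : Zf a m j = 1 := by
      have hmt : m - (k + t) = (m - k) + t := by
        linear_combination (-1 : ZMod (2*t)) * tt_zero ht
      simp only [Zf, hj, hmt]
      rw [if_neg]
      rw [win_add_t ht]
      simp only [not_not]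
      exact hd
    rw [hZ, h1] at h2; norm_num at h2

lemma Zf_inj (ht : 0 < t) (hanti : ∀ i j, a i ≠ a j + t)
    (hcov : ∀ x : ZMod (2*t), (∃ j, a j = x) ∨ (∃ j, a j = x + t)) :
    Function.Injective (Zf a) := by
  haveI : NeZero (2*t) := ⟨by omega⟩
  intro k m h
  by_contra hne
  have h1 : (m - k) ≠ 0 := fun hc => hne (sub_eq_zero.mp hc).symm
  have hv1 : 1 ≤ (m - k).val := by
    rcases Nat.eq_zero_or_pos (m - k).val with h0 | h0
    · exact absurd ((ZMod.val_eq_zero _).mp h0) h1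
    · exact h0
  by_cases hc : (m - k).val ≤ t
  · exact Zf_inj_core ht hanti hcov k m ⟨hv1, hc⟩ h.symm
  · have hA := helperA ht k m
    have hB := helperA ht m k
    have hk := val_lt' ht k
    have hm := val_lt' ht m
    refine Zf_inj_core ht hanti hcov m k ⟨?_, ?_⟩ h <;>
      (split_ifs at hA hB <;> omega)

lemma exists_add_t_iff (ht : 0 < t) (hinj : Function.Injective a)
    (hanti : ∀ i j, a i ≠ a j + t) (y : ZMod (2*t)) :
    (∃ j, a j = y + t) ↔ ¬(∃ j, a j = y) :=
  ⟨fun h h' => not_both hanti y h' h, fun h => (cover ht hinj hanti y).resolve_left h⟩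

lemma sum_min (ht : 0 < t) (hinj : Function.Injective a)
    (hanti : ∀ i j, a i ≠ a j + t) (M : Finset (ZMod (2*t)))
    (hM : ∀ k, k ∈ M ↔ ((∃ j, a j = k) ∧ ¬(∃ j, a j = k - 1))) (j0 : Fin t) :
    ∑ k ∈ M, Zf a k j0 = 1 := by
  classical
  haveI : NeZero (2*t) := ⟨by omega⟩
  set x := a j0 with hx
  have himg : (Finset.univ : Finset (ZMod (2*t)))
      = (Finset.range (2*t)).image (fun i : ℕ => x + 1 + i) := by
    apply Finset.ext
    intro k
    simp only [Finset.mem_univ, Finset.mem_image, Finset.mem_range, true_iff]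
    exact ⟨(k - x - 1).val, val_lt' ht _, by rw [cast_val_eq ht]; ring⟩
  have hstep1 : ∑ k ∈ M, Zf a k j0 = ∑ k ∈ Finset.univ, (if k ∈ M then Zf a k j0 else 0) := by
    rw [Finset.sum_ite_mem, Finset.univ_inter]
  rw [hstep1, himg, Finset.sum_image ?hinj]
  case hinj =>
    intro i hi i' hi' h
    have h2 : ((i : ℕ) : ZMod (2*t)) = ((i' : ℕ) : ZMod (2*t)) := by
      have h3 : (x + 1) + ((i : ℕ) : ZMod (2*t)) = (x + 1) + ((i' : ℕ) : ZMod (2*t)) := by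
        beta_reduce at h
        rw [add_assoc, add_assoc] at h ⊢; exact h
      exact add_left_cancel h3
    have := congrArg ZMod.val h2
    rw [val_natCast_lt ht i (Finset.mem_range.mp hi),
        val_natCast_lt ht i' (Finset.mem_range.mp hi')] at this
    exact this
  rw [show Finset.range (2*t) = Finset.range (t+t) from by rw [two_mul], Finset.sum_range_add]
  set g : ℕ → ℝ := fun i => if (∃ j, a j = x + i) then 1 else 0 with hg
  have key : ∀ i ∈ Finset.range t,
      ((if (x + 1 + (i:ℕ)) ∈ M then Zf a (x + 1 + (i:ℕ)) j0 else 0)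
        + (if (x + 1 + ((t + i : ℕ) : ZMod (2*t))) ∈ M then Zf a (x + 1 + ((t+i : ℕ) : ZMod (2*t))) j0 else 0))
      = g i - g (i + 1) := by
    intro i hi
    have hi' : i < t := Finset.mem_range.mp hi
    -- value of first tope at j0
    have ZA : Zf a (x + 1 + (i:ℕ)) j0 = -1 := by
      rw [Zf_neg_iff, ← hx]
      have e1 : x + 1 + (i:ℕ) - x = ((1 + i : ℕ) : ZMod (2*t)) := by push_cast; ring
      rw [e1, val_natCast_lt ht _ (by omega)]
      omega
    -- value of second tope at j0
    have ZB : Zf a (x + 1 + ((t + i : ℕ) : ZMod (2*t))) j0 = 1 := by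
      have e2 : x + 1 + ((t + i : ℕ) : ZMod (2*t)) - x = ((1 + t + i : ℕ) : ZMod (2*t)) := by
        push_cast; ring
      simp only [Zf, ← hx, e2]
      rw [if_neg]
      rw [ZMod.val_natCast, modlem _ _ (by omega) (by omega)]
      split_ifs <;> omega
    have e3 : x + 1 + (i:ℕ) - 1 = x + (i:ℕ) := by ring
    have m1 : ((x + 1 + (i:ℕ)) ∈ M) ↔ ((∃ j, a j = x + 1 + (i:ℕ)) ∧ ¬(∃ j, a j = x + (i:ℕ))) := by
      rw [hM, e3]
    have e4 : x + 1 + ((t + i : ℕ) : ZMod (2*t)) = (x + 1 + (i:ℕ)) + t := by push_cast; ring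
    have e5 : x + 1 + ((t + i : ℕ) : ZMod (2*t)) - 1 = (x + (i:ℕ)) + t := by push_cast; ring
    have m2 : ((x + 1 + ((t + i : ℕ) : ZMod (2*t))) ∈ M)
        ↔ (¬(∃ j, a j = x + 1 + (i:ℕ)) ∧ (∃ j, a j = x + (i:ℕ))) := by
      rw [hM, e5, e4, exists_add_t_iff ht hinj hanti, exists_add_t_iff ht hinj hanti, not_not]
    have e6 : x + ((i : ℕ) + 1 : ℕ) = x + 1 + (i : ℕ) := by push_cast; ring
    by_cases hP : (∃ j, a j = x + 1 + (i:ℕ)) <;> by_cases hQ : (∃ j, a j = x + (i:ℕ)) <;>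
      simp only [hg, m1, m2, hP, hQ, ZA, ZB, e6, not_true, not_false_iff, true_and, false_and,
        and_true, and_false, if_true, if_false] <;> norm_num
  rw [← Finset.sum_add_distrib] at *
  rw [Finset.sum_congr rfl key, Finset.sum_range_sub' g t]
  have hg0 : g 0 = 1 := by
    simp only [hg, Nat.cast_zero, add_zero]
    rw [if_pos ⟨j0, rfl⟩]
  have hgt : g t = 0 := by
    simp only [hg]
    rw [if_neg]
    exact not_both hanti x ⟨j0, rfl⟩
  rw [hg0, hgt]
  norm_num

lemma one_val (ht : 0 < t) : (1 : ZMod (2*t)).val = 1 := by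
  have h : (1 : ZMod (2*t)) = ((1 : ℕ) : ZMod (2*t)) := by norm_num
  rw [h, val_natCast_lt ht 1 (by omega)]

lemma val_zero' (ht : 0 < t) : (0 : ZMod (2*t)).val = 0 := by
  haveI : NeZero (2*t) := ⟨by omega⟩
  exact ZMod.val_zero

lemma ne_of_valsub {k m : ZMod (2*t)} (ht : 0 < t) (hne : m ≠ k) : (m - k).val ≠ 0 := by
  intro h
  haveI : NeZero (2*t) := ⟨by omega⟩
  exact hne (sub_eq_zero.mp ((ZMod.val_eq_zero _).mp h))

lemma eq_t_of_val {v : ZMod (2*t)} (ht : 0 < t) (h : v.val = t) : v = (t : ZMod (2*t)) := by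
  apply eq_of_val_eq ht
  rw [h, val_natCast_lt ht t (by omega)]

lemma min1 (ht : 0 < t) (hinj : Function.Injective a)
    (hanti : ∀ i j, a i ≠ a j + t) {k : ZMod (2*t)}
    (hk : ∃ j, a j = k) (hk1 : ¬∃ j, a j = k - 1)
    (m : ZMod (2*t)) (hsub : ∀ j, Zf a m j = -1 → Zf a k j = -1) : m = k := by
  by_contra hne
  have hv1 : 1 ≤ (m - k).val := Nat.one_le_iff_ne_zero.mpr (ne_of_valsub ht hne)
  have hvlt := val_lt' ht (m - k)
  by_cases hd : (m - k).val ≤ t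
  · obtain ⟨j, hj⟩ := hk
    have h1 : Zf a m j = -1 := by rw [Zf_neg_iff, hj]; exact ⟨hv1, hd⟩
    have h2 := hsub j h1
    rw [Zf_neg_iff, hj, sub_self, val_zero' ht] at h2
    omega
  · obtain ⟨j, hj⟩ := (exists_add_t_iff ht hinj hanti (k - 1)).mpr hk1
    have ec : ((t - 1 : ℕ) : ZMod (2*t)) = (t : ZMod (2*t)) - 1 := by
      push_cast [Nat.cast_sub (by omega : 1 ≤ t)]
      ring
    have ecv : ((t - 1 : ℕ) : ZMod (2*t)).val = t - 1 := val_natCast_lt ht _ (by omega)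
    have h1 : Zf a m j = -1 := by
      rw [Zf_neg_iff, hj]
      have e1 : m - (k - 1 + t) = (m - k) - ((t - 1 : ℕ) : ZMod (2*t)) := by rw [ec]; ring
      rw [e1, helperA ht, ecv]
      split_ifs <;> omega
    have h2 := hsub j h1
    rw [Zf_neg_iff, hj] at h2
    have e2 : k - (k - 1 + t) = (0 : ZMod (2*t)) - ((t - 1 : ℕ) : ZMod (2*t)) := by rw [ec]; ring
    rw [e2, helperA ht, ecv, val_zero' ht] at h2
    split_ifs at h2 <;> omega

lemma min2 (ht : 0 < t) (hinj : Function.Injective a)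
    (hanti : ∀ i j, a i ≠ a j + t) {k : ZMod (2*t)}
    (hk : ¬((∃ j, a j = k) ∧ ¬(∃ j, a j = k - 1))) :
    ∃ m, m ≠ k ∧ (∀ j, Zf a m j = -1 → Zf a k j = -1) := by
  classical
  have hone := one_val (t := t) ht
  by_cases hA : ∃ j, a j = k
  · have hk1 : ∃ j, a j = k - 1 := by tauto
    -- t ≥ 2
    have ht2 : 2 ≤ t := by
      by_contra hc
      have ht1 : t = 1 := by omega
      have hz : ((1 + t : ℕ) : ZMod (2*t)) = 0 := by
        rw [show 1 + t = 2*t by omega, ZMod.natCast_self]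
      have hnn : -(1 : ZMod (2*t)) = (t : ZMod (2*t)) := by
        have : ((1 : ℕ) : ZMod (2*t)) + ((t:ℕ) : ZMod (2*t)) = 0 := by
          rw [← Nat.cast_add]; exact hz
        have h2 := neg_eq_of_add_eq_zero_right this
        simpa using h2
      obtain ⟨j1, hj1⟩ := hk1
      obtain ⟨j0, hj0⟩ := hA
      apply hanti j1 j0
      rw [hj1, hj0, sub_eq_add_neg, hnn]
    refine ⟨k - 1, ?_, ?_⟩
    · intro hc
      have h1 : (1 : ZMod (2*t)) = 0 := by linear_combination (-1 : ZMod (2*t)) * hc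
      have := congrArg ZMod.val h1
      rw [hone, val_zero' ht] at this
      omega
    · intro j hj
      rw [Zf_neg_iff] at hj ⊢
      have hdt : (k - 1 - a j).val ≠ t := by
        intro hEq
        have : a j = (k - 1) + t := by
          have h1 := eq_t_of_val ht hEq
          rw [← neg_t_eq ht]
          linear_combination -h1
        exact not_both hanti (k - 1) hk1 ⟨j, this⟩
      have e1 : k - a j = (k - 1 - a j) + ((1 : ℕ) : ZMod (2*t)) := by push_cast; ring
      rw [e1, helperB ht _ 1 (by omega)]
      split_ifs <;> omega
  · refine ⟨k + 1, ?_, ?_⟩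
    · intro hc
      have h1 : (1 : ZMod (2*t)) = 0 := by linear_combination hc
      have := congrArg ZMod.val h1
      rw [hone, val_zero' ht] at this
      omega
    · intro j hj
      rw [Zf_neg_iff] at hj ⊢
      have hd1 : (k + 1 - a j).val ≠ 1 := by
        intro hEq
        apply hA
        refine ⟨j, ?_⟩
        have h1 : k + 1 - a j = 1 := by
          apply eq_of_val_eq ht
          rw [hEq, hone]
        linear_combination -h1
      have e1 : k - a j = (k + 1 - a j) - ((1 : ℕ) : ZMod (2*t)) := by push_cast; ring
      rw [e1, helperA ht, val_natCast_lt ht 1 (by omega)]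
      split_ifs <;> omega

lemma pairw (ht : 0 < t) (hanti : ∀ i j, a i ≠ a j + t) {k1 k2 : ZMod (2*t)}
    (h1 : ∃ j, a j = k1) (h2 : ∃ j, a j = k2) :
    ((if 1 ≤ (k1 - k2).val ∧ (k1 - k2).val ≤ t then (1:ℝ) else 0)
      + (if 1 ≤ (k2 - k1).val ∧ (k2 - k1).val ≤ t then (1:ℝ) else 0))
    = if k1 = k2 then 0 else 1 := by
  by_cases he : k1 = k2
  · subst he
    rw [if_pos rfl, sub_self, val_zero' ht]
    norm_num
  · rw [if_neg he]
    have hv0 : (k1 - k2).val ≠ 0 := ne_of_valsub ht he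
    have hv0' : (k2 - k1).val ≠ 0 := ne_of_valsub ht (Ne.symm he)
    have hvt : (k1 - k2).val ≠ t := by
      intro hEq
      obtain ⟨j1, hj1⟩ := h1
      obtain ⟨j2, hj2⟩ := h2
      apply hanti j1 j2
      have h3 := eq_t_of_val ht hEq
      rw [hj1, hj2]
      linear_combination h3
    have hA := helperA ht k1 k2
    have hB := helperA ht k2 k1
    have hl1 := val_lt' ht k1
    have hl2 := val_lt' ht k2
    have hne : k1.val ≠ k2.val := fun h => he (eq_of_val_eq ht h)
    have hsum : (k1 - k2).val + (k2 - k1).val = 2*t := by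
      split_ifs at hA hB <;> omega
    have hub := val_lt' ht (k2 - k1)
    split_ifs with hc1 hc2 hc2 <;> first | (norm_num; done) | (exfalso; omega)

lemma flipval {u v : ℝ} (hu : u = -1 ∨ u = 1) (hv : v = -1 ∨ v = 1) (hne : u ≠ v) :
    u = -v := by
  rcases hu with h|h <;> rcases hv with h'|h' <;> subst h <;> subst h' <;> norm_num
  · exact hne rfl
  · exact hne rfl

end Stmt13

open Stmt13

theorem stmt_13 (t : ℕ) (ht : 0 < t)
    (R : Fin (t + 1) → Fin t → ℝ)
    (hsign : ∀ k j, R k j = -1 ∨ R k j = 1)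
    (hRt : R (Fin.last t) = -(R 0))
    (l : Fin t → Fin t) (hl : Function.Bijective l)
    (hstep : ∀ (k : Fin t) (j : Fin t), R k.castSucc j ≠ R k.succ j ↔ j = l k)
    (V : Finset (Fin t → ℝ))
    (hV : V = (Finset.univ.image fun k : Fin t => R k.castSucc)
        ∪ (Finset.univ.image fun k : Fin t => -(R k.castSucc)))
    (minV : Finset (Fin t → ℝ))
    (hmin : minV = V.filter fun O => ∀ P ∈ V,
      (Finset.univ.filter fun e => P e = -1) ⊆ (Finset.univ.filter fun e => O e = -1)
        → P = O) :
    (∑ q ∈ minV, q) = (fun _ => (1 : ℝ)) ∧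
    ∀ K : Finset (Fin t → ℝ), K ⊂ minV → ¬ (∀ j : Fin t, 1 ≤ ∑ q ∈ K, q j) := by
  classical
  haveI : NeZero (2*t) := ⟨by omega⟩
  set e : Fin t ≃ Fin t := Equiv.ofBijective l hl with he
  set m : Fin t → Fin t := fun j => e.symm j with hm
  have hml : ∀ j, l (m j) = j := fun j => e.apply_symm_apply j
  have hminj : Function.Injective m := fun x y hxy => e.symm.injective hxy
  -- the step formula
  have key : ∀ (ki : ℕ) (hki : ki ≤ t) (j : Fin t),
      R ⟨ki, by omega⟩ j = if ki ≤ (m j : ℕ) then R 0 j else -(R 0 j) := by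
    intro ki
    induction ki with
    | zero =>
      intro _ j
      simp only [Nat.zero_le, if_true]
      rfl
    | succ n ih =>
      intro hki j
      have hn : n ≤ t := by omega
      have hnt : n < t := by omega
      have hcast : (⟨n+1, by omega⟩ : Fin (t+1)) = (⟨n, hnt⟩ : Fin t).succ := rfl
      have hcast2 : (⟨n, by omega⟩ : Fin (t+1)) = (⟨n, hnt⟩ : Fin t).castSucc := rfl
      by_cases hj : j = l ⟨n, hnt⟩
      · have hne := (hstep ⟨n, hnt⟩ j).mpr hj
        have hmj : m j = ⟨n, hnt⟩ := by
          rw [hj]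
          have : e.symm (e ⟨n, hnt⟩) = ⟨n, hnt⟩ := e.symm_apply_apply _
          exact this
        have hval : R (⟨n, hnt⟩ : Fin t).succ j = -(R (⟨n, hnt⟩ : Fin t).castSucc j) :=
          flipval (hsign _ j) (hsign _ j) (Ne.symm hne)
        have hihv := ih hn j
        rw [hcast2] at hihv
        rw [hcast, hval, hihv, hmj]
        simp only []
        rw [if_pos (by omega), if_neg (by omega)]
      · have heq : R (⟨n, hnt⟩ : Fin t).castSucc j = R (⟨n, hnt⟩ : Fin t).succ j := by
          by_contra hne
          exact hj ((hstep ⟨n, hnt⟩ j).mp hne)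
        have hmjne : (m j : ℕ) ≠ n := by
          intro hc
          apply hj
          rw [← hml j]
          congr 1
          exact Fin.ext hc
        have hihv := ih hn j
        rw [hcast2] at hihv
        rw [hcast, ← heq, hihv]
        split_ifs with h1 h2 h2 <;> first | rfl | (exfalso; omega)
  have key' : ∀ (k : Fin t) (j : Fin t),
      R k.castSucc j = if (k : ℕ) ≤ (m j : ℕ) then R 0 j else -(R 0 j) := by
    intro k j
    exact key k.val k.isLt.le j
  -- the circular positions
  set a : Fin t → ZMod (2*t) := fun j =>
    if R 0 j = 1 then ((m j : ℕ) : ZMod (2*t)) else ((m j : ℕ) : ZMod (2*t)) + ((t:ℕ) : ZMod (2*t))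
    with ha
  have aval : ∀ j, (a j).val = if R 0 j = 1 then (m j : ℕ) else (m j : ℕ) + t := by
    intro j
    have hmj := (m j).isLt
    by_cases hs : R 0 j = 1 <;> simp only [ha, hs, if_true, if_false]
    · exact val_natCast_lt ht _ (by omega)
    · rw [helperB ht _ t (by omega), val_natCast_lt ht _ (by omega)]
      split_ifs <;> omega
  have ainj : Function.Injective a := by
    intro i j h
    have hv := congrArg ZMod.val h
    rw [aval i, aval j] at hv
    have hi := (m i).isLt
    have hj := (m j).isLt
    have hmm : (m i : ℕ) = (m j : ℕ) := by split_ifs at hv <;> omega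
    exact hminj (Fin.ext hmm)
  have hanti : ∀ i j, a i ≠ a j + ((t:ℕ) : ZMod (2*t)) := by
    intro i j h
    have hv := congrArg ZMod.val h
    rw [helperB ht _ t (by omega), aval i, aval j] at hv
    have hi := (m i).isLt
    have hj := (m j).isLt
    have hmm : (m i : ℕ) = (m j : ℕ) ∧ ¬((R 0 i = 1) ↔ (R 0 j = 1)) := by
      by_cases hsi : R 0 i = 1 <;> by_cases hsj : R 0 j = 1 <;>
        simp only [hsi, hsj, if_true, if_false] at hv ⊢ <;> split_ifs at hv <;>
          first | (exfalso; omega) | (constructor; omega; tauto) | tauto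
    have := hminj (Fin.ext hmm.1)
    rw [this] at hmm
    tauto
  have hcov := cover ht ainj hanti
  have hZinj := Zf_inj ht hanti hcov
  -- R in terms of Zf
  have hZR : ∀ k : Fin t, R k.castSucc = Zf a (((k:ℕ) : ZMod (2*t))) := by
    intro k
    funext j
    rw [key' k j]
    have hk := k.isLt
    have hmj := (m j).isLt
    have hsub := helperA ht (((k:ℕ) : ZMod (2*t))) (a j)
    rw [aval j, val_natCast_lt ht _ (by omega)] at hsub
    by_cases hs : R 0 j = 1
    · rw [if_pos hs] at hsub
      rw [hs]
      by_cases hc : (k:ℕ) ≤ (m j : ℕ)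
      · rw [if_pos hc]
        simp only [Zf]
        rw [if_neg (by split_ifs at hsub <;> omega)]
      · rw [if_neg hc]
        simp only [Zf]
        rw [if_pos (by split_ifs at hsub <;> omega)]
    · have hs' : R 0 j = -1 := (hsign 0 j).resolve_right hs
      rw [if_neg hs] at hsub
      rw [hs']
      by_cases hc : (k:ℕ) ≤ (m j : ℕ)
      · rw [if_pos hc]
        simp only [Zf]
        rw [if_pos (by split_ifs at hsub <;> omega)]
      · rw [if_neg hc]
        simp only [Zf]
        rw [if_neg (by split_ifs at hsub <;> omega)]
        norm_num
  have hZnegR : ∀ k : Fin t, -(R k.castSucc) = Zf a (((k:ℕ) : ZMod (2*t)) + ((t:ℕ) : ZMod (2*t))) := by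
    intro k
    rw [Zf_add_t ht, hZR k]
  -- V as image
  have hVim : V = Finset.image (fun k : ZMod (2*t) => Zf a k) Finset.univ := by
    rw [hV]
    apply Finset.ext
    intro q
    simp only [Finset.mem_union, Finset.mem_image, Finset.mem_univ, true_and]
    constructor
    · rintro (⟨k, rfl⟩ | ⟨k, rfl⟩)
      · exact ⟨((k:ℕ) : ZMod (2*t)), (hZR k).symm⟩
      · exact ⟨((k:ℕ) : ZMod (2*t)) + ((t:ℕ) : ZMod (2*t)), (hZnegR k).symm⟩
    · rintro ⟨x, rfl⟩
      have hxlt := val_lt' ht x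
      by_cases hx : x.val < t
      · left
        refine ⟨⟨x.val, hx⟩, ?_⟩
        have hxx : (((⟨x.val, hx⟩ : Fin t) : ℕ) : ZMod (2*t)) = x := cast_val_eq ht x
        rw [hZR ⟨x.val, hx⟩, hxx]
      · right
        have h2 : x.val - t < t := by omega
        refine ⟨⟨x.val - t, h2⟩, ?_⟩
        have hxx : (((⟨x.val - t, h2⟩ : Fin t) : ℕ) : ZMod (2*t)) + ((t:ℕ) : ZMod (2*t)) = x := by
          show ((x.val - t : ℕ) : ZMod (2*t)) + ((t:ℕ) : ZMod (2*t)) = x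
          rw [← Nat.cast_add, show x.val - t + t = x.val by omega]
          exact cast_val_eq ht x
        rw [hZnegR ⟨x.val - t, h2⟩, hxx]
  -- the minimal set
  set Mset : Finset (ZMod (2*t)) :=
    Finset.univ.filter (fun k => (∃ j, a j = k) ∧ ¬(∃ j, a j = k - 1)) with hMset
  have hMmem : ∀ k, k ∈ Mset ↔ ((∃ j, a j = k) ∧ ¬(∃ j, a j = k - 1)) := by
    intro k
    simp [hMset]
  have hminVim : minV = Finset.image (fun k : ZMod (2*t) => Zf a k) Mset := by
    rw [hmin, hVim]
    apply Finset.ext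
    intro q
    simp only [Finset.mem_filter, Finset.mem_image, Finset.mem_univ, true_and]
    constructor
    · rintro ⟨⟨x, rfl⟩, hcond⟩
      refine ⟨x, ?_, rfl⟩
      rw [hMmem]
      by_contra hnot
      obtain ⟨m', hm'ne, hm'sub⟩ := min2 ht ainj hanti hnot
      have hPcond : Zf a m' = Zf a x := by
        apply hcond (Zf a m') ⟨m', rfl⟩
        intro j hj
        rw [Finset.mem_filter] at hj ⊢
        exact ⟨Finset.mem_univ _, hm'sub j hj.2⟩
      exact hm'ne (hZinj hPcond)
    · rintro ⟨x, hxM, rfl⟩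
      rw [hMmem] at hxM
      refine ⟨⟨x, rfl⟩, ?_⟩
      rintro P ⟨y, rfl⟩ hsub
      have hy : y = x := by
        apply min1 ht ainj hanti hxM.1 hxM.2 y
        intro j hj
        have := hsub (Finset.mem_filter.mpr ⟨Finset.mem_univ _, hj⟩)
        exact (Finset.mem_filter.mp this).2
      rw [hy]
  -- the coordinatewise sum over minV
  have hsum1 : ∀ j, ∑ q ∈ minV, q j = 1 := by
    intro j
    rw [hminVim, Finset.sum_image (fun x _ y _ h => hZinj h)]
    exact sum_min ht ainj hanti Mset hMmem j
  constructor
  · funext j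
    rw [Finset.sum_apply]
    exact hsum1 j
  · intro K hK hge
    set D := minV \ K with hD
    have hKsub := hK.subset
    have hDne : D.Nonempty := Finset.sdiff_nonempty.mpr hK.2
    have hDsum : ∀ j, ∑ q ∈ D, q j ≤ 0 := by
      intro j
      have hsplit : ∑ q ∈ D, q j + ∑ q ∈ K, q j = ∑ q ∈ minV, q j :=
        Finset.sum_sdiff hKsub
      have h2 := hge j
      have h3 := hsum1 j
      linarith
    set E := Mset.filter (fun k => Zf a k ∈ D) with hE
    have hED : ∀ q, q ∈ D ↔ ∃ k ∈ E, Zf a k = q := by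
      intro q
      constructor
      · intro hq
        have hqm : q ∈ minV := Finset.sdiff_subset hq
        rw [hminVim] at hqm
        obtain ⟨x, hx, rfl⟩ := Finset.mem_image.mp hqm
        exact ⟨x, Finset.mem_filter.mpr ⟨hx, hq⟩, rfl⟩
      · rintro ⟨k, hk, rfl⟩
        exact (Finset.mem_filter.mp hk).2
    have hDimg : D = E.image (fun k => Zf a k) :=
      Finset.ext (fun q => (hED q).trans (Finset.mem_image).symm)
    have hEne : E.Nonempty := by
      obtain ⟨q, hq⟩ := hDne
      obtain ⟨k, hk, -⟩ := (hED q).mp hq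
      exact ⟨k, hk⟩
    have hEsum : ∀ j, ∑ k ∈ E, Zf a k j ≤ 0 := by
      intro j
      have h1 := hDsum j
      rw [hDimg, Finset.sum_image (fun x _ y _ h => hZinj h)] at h1
      exact h1
    have hEA : ∀ k ∈ E, ∃ j, a j = k := fun k hk =>
      ((hMmem k).mp (Finset.mem_filter.mp hk).1).1
    set c := (E.card : ℝ) with hc
    have hcpos : 1 ≤ c := by
      rw [hc]
      exact_mod_cast Finset.card_pos.mpr hEne
    have hZw : ∀ (k : ZMod (2*t)) (j : Fin t), Zf a k j
        = 1 - 2 * (if 1 ≤ (k - a j).val ∧ (k - a j).val ≤ t then (1:ℝ) else 0) := by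
      intro k j
      simp only [Zf]
      split_ifs <;> norm_num
    have hN : ∀ k0 ∈ E, c ≤ 2 * ∑ k ∈ E,
        (if 1 ≤ (k - k0).val ∧ (k - k0).val ≤ t then (1:ℝ) else 0) := by
      intro k0 hk0
      obtain ⟨j0, hj0⟩ := hEA k0 hk0
      have h1 := hEsum j0
      have h2 : ∑ k ∈ E, Zf a k j0
          = c - 2 * ∑ k ∈ E, (if 1 ≤ (k - k0).val ∧ (k - k0).val ≤ t then (1:ℝ) else 0) := by
        rw [Finset.sum_congr rfl (fun k _ => hZw k j0)]
        simp only [hj0]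
        rw [Finset.sum_sub_distrib, Finset.sum_const, ← Finset.mul_sum, nsmul_eq_mul, mul_one]
      linarith
    have htot : 2 * (∑ k0 ∈ E, ∑ k ∈ E,
        (if 1 ≤ (k - k0).val ∧ (k - k0).val ≤ t then (1:ℝ) else 0)) = c * (c - 1) := by
      rw [two_mul]
      nth_rewrite 2 [Finset.sum_comm]
      rw [← Finset.sum_add_distrib]
      have hinner : ∀ k0 ∈ E, (∑ k ∈ E, (if 1 ≤ (k - k0).val ∧ (k - k0).val ≤ t then (1:ℝ) else 0))
          + (∑ k ∈ E, (if 1 ≤ (k0 - k).val ∧ (k0 - k).val ≤ t then (1:ℝ) else 0)) = c - 1 := by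
        intro k0 hk0
        rw [← Finset.sum_add_distrib]
        have hpair : ∀ k ∈ E, (if 1 ≤ (k - k0).val ∧ (k - k0).val ≤ t then (1:ℝ) else 0)
            + (if 1 ≤ (k0 - k).val ∧ (k0 - k).val ≤ t then (1:ℝ) else 0)
            = if k = k0 then 0 else 1 := fun k hk =>
          pairw ht hanti (hEA k hk) (hEA k0 hk0)
        rw [Finset.sum_congr rfl hpair]
        have : ∑ k ∈ E, (if k = k0 then (0:ℝ) else 1)
            = ∑ k ∈ E, (1 - if k = k0 then (1:ℝ) else 0) := by
          apply Finset.sum_congr rfl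
          intro k _
          split_ifs <;> norm_num
        rw [this, Finset.sum_sub_distrib, Finset.sum_const, nsmul_eq_mul, mul_one,
          Finset.sum_ite_eq' E k0 (fun _ => (1:ℝ)), if_pos hk0]
      rw [Finset.sum_congr rfl hinner, Finset.sum_const, nsmul_eq_mul]
    have hbig : c * c ≤ c * (c - 1) := by
      calc c * c = ∑ _k0 ∈ E, c := by rw [Finset.sum_const, nsmul_eq_mul]
        _ ≤ ∑ k0 ∈ E, 2 * ∑ k ∈ E, (if 1 ≤ (k - k0).val ∧ (k - k0).val ≤ t then (1:ℝ) else 0) :=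
            Finset.sum_le_sum hN
        _ = 2 * ∑ k0 ∈ E, ∑ k ∈ E, (if 1 ≤ (k - k0).val ∧ (k - k0).val ≤ t then (1:ℝ) else 0) := by
            rw [Finset.mul_sum]
        _ = c * (c - 1) := htot
    nlinarith
end

section
/- With V(R) as above and x = T⁺·M^{-1} the coordinate vector of the all-ones vector T⁺ in the basis R^0,…,R^{t-1}, the number of nonzero entries of x is odd, and each vertex R^{i-1} with x_i = 1 together with each -R^{i-1} = R^{i-1+t} with x_i = -1 gives exactly |{i : x_i ≠ 0}| distinct elements of V(R) summing to T⁺; hence every {-1,1}-vector is a sum of an odd number of distinct vertices of any symmetric cycle's vertex set. -/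
open Finset Matrix

section
variable {t : ℕ} [NeZero t] {R : Fin (t + 1) → Fin t → ℝ} {l : Fin t → Fin t}

lemma sq_one (hsign : ∀ k j, R k j = -1 ∨ R k j = 1) (k : Fin (t+1)) (j : Fin t) :
    R k j * R k j = 1 := by rcases hsign k j with h | h <;> rw [h] <;> norm_num

lemma Rne_zero (hsign : ∀ k j, R k j = -1 ∨ R k j = 1) (k : Fin (t+1)) (j : Fin t) :
    R k j ≠ 0 := by rcases hsign k j with h | h <;> rw [h] <;> norm_num

lemma Rstep (hsign : ∀ k j, R k j = -1 ∨ R k j = 1)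
    (hstep : ∀ (k : Fin t) (j : Fin t), R k.castSucc j ≠ R k.succ j ↔ j = l k)
    (k : Fin t) (j : Fin t) :
    R k.succ j = if j = l k then -R k.castSucc j else R k.castSucc j := by
  by_cases h : j = l k
  · simp only [h, if_pos rfl]
    have hne : R k.castSucc (l k) ≠ R k.succ (l k) := (hstep k (l k)).2 rfl
    rcases hsign k.castSucc (l k) with h1 | h1 <;> rcases hsign k.succ (l k) with h2 | h2 <;>
      rw [h1, h2] at hne ⊢ <;> revert hne <;> norm_num
  · simp only [h, if_neg h]
    by_contra hne
    exact h ((hstep k j).1 (Ne.symm hne))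

lemma Rstable (hsign : ∀ k j, R k j = -1 ∨ R k j = 1)
    (hstep : ∀ (k : Fin t) (j : Fin t), R k.castSucc j ≠ R k.succ j ↔ j = l k)
    (k : Fin (t+1)) (j : Fin t) :
    ∀ m : Fin (t+1), k ≤ m → (∀ p : Fin t, k ≤ p.castSucc → p.castSucc < m → l p ≠ j) →
      R m j = R k j := by
  intro m
  induction m using Fin.induction with
  | zero => intro hk _; rw [Fin.le_zero_iff.1 hk]
  | succ i ih =>
    intro hk hp
    rcases eq_or_lt_of_le hk with he | hlt
    · rw [← he]
    · have hki : k ≤ i.castSucc := Fin.le_castSucc_iff.2 hlt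
      have hij : l i ≠ j := hp i hki Fin.castSucc_lt_succ
      rw [Rstep hsign hstep i j, if_neg (fun hj => hij hj.symm)]
      exact ih hki (fun p h1 h2 => hp p h1 (h2.trans Fin.castSucc_lt_succ))

-- distinctness
lemma Rflip (hsign : ∀ k j, R k j = -1 ∨ R k j = 1)
    (hl : Function.Bijective l)
    (hstep : ∀ (k : Fin t) (j : Fin t), R k.castSucc j ≠ R k.succ j ↔ j = l k)
    (i k : Fin t) (hik : i < k) :
    R k.castSucc (l i) = -R i.castSucc (l i) := by
  have h1 : R i.succ (l i) = -R i.castSucc (l i) := by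
    rw [Rstep hsign hstep i (l i), if_pos rfl]
  rw [← h1]
  apply Rstable hsign hstep i.succ (l i) k.castSucc
  · rwa [Fin.succ_le_castSucc_iff]
  · intro p hp1 _ hfalse
    have : p = i := hl.1 hfalse
    subst this
    exact absurd hp1 (by simp [Fin.le_castSucc_iff])
lemma Rsame (hsign : ∀ k j, R k j = -1 ∨ R k j = 1)
    (hl : Function.Bijective l)
    (hstep : ∀ (k : Fin t) (j : Fin t), R k.castSucc j ≠ R k.succ j ↔ j = l k)
    (i k : Fin t) (hik : i < k) :
    R k.castSucc (l k) = R i.castSucc (l k) := by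
  apply Rstable hsign hstep i.castSucc (l k) k.castSucc
  · exact_mod_cast hik.le
  · intro p _ hp2 hfalse
    have : p = k := hl.1 hfalse
    subst this
    exact absurd hp2 (lt_irrefl _)
end

lemma sum_helper {n : Type*} [Fintype n] [DecidableEq n] (k1 k2 : n) (A B : ℝ) (f : n → ℝ) :
    ∑ m, ((if m = k1 then 1 else 0) * A + (if m = k2 then 1 else 0) * B) * f m
      = A * f k1 + B * f k2 := by
  simp only [add_mul, Finset.sum_add_distrib, ite_mul, one_mul, zero_mul,
    Finset.sum_ite_eq', Finset.mem_univ, if_true]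

section
variable {t : ℕ} [NeZero t] (R : Fin (t + 1) → Fin t → ℝ) (l : Fin t → Fin t)

lemma val_add_one (k : Fin t) :
    ((k + 1 : Fin t) : ℕ) = if (k:ℕ) + 1 = t then 0 else (k:ℕ) + 1 := by
  have hkt := k.isLt
  rw [Fin.val_add, Fin.val_one']
  by_cases h : (k:ℕ) + 1 = t
  · rw [if_pos h]
    rcases Nat.eq_or_lt_of_le (Nat.one_le_iff_ne_zero.2 (NeZero.ne t)) with h1 | h1
    · subst h1
      omega
    · rw [Nat.mod_eq_of_lt h1, h, Nat.mod_self]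
  · rw [if_neg h]
    have h1 : 1 < t := by omega
    rw [Nat.mod_eq_of_lt h1, Nat.mod_eq_of_lt (by omega)]

lemma succ_eq_last {k : Fin t} (h : k + 1 = 0) : k.succ = Fin.last t := by
  have hv := val_add_one k
  rw [h] at hv
  simp only [Fin.val_zero] at hv
  apply Fin.ext
  rw [Fin.val_succ, Fin.val_last]
  by_cases h2 : (k:ℕ) + 1 = t
  · exact h2
  · rw [if_neg h2] at hv; omega

lemma castSucc_add_one {k : Fin t} (h : k + 1 ≠ 0) : (k + 1 : Fin t).castSucc = k.succ := by
  have hv := val_add_one k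
  apply Fin.ext
  rw [Fin.coe_castSucc, Fin.val_succ, hv]
  by_cases h2 : (k:ℕ) + 1 = t
  · exfalso; apply h; apply Fin.ext
    rw [hv, if_pos h2, Fin.val_zero]
  · rw [if_neg h2]

noncomputable def aa : Fin t → ℝ := fun k => R k.castSucc (l k) / 2

noncomputable def NN (hl : Function.Bijective l) : Matrix (Fin t) (Fin t) ℝ :=
  Matrix.of fun j m =>
    (if m = (Equiv.ofBijective l hl).symm j then 1 else 0)
      * aa R l ((Equiv.ofBijective l hl).symm j)
    + (if m = (Equiv.ofBijective l hl).symm j + 1 then 1 else 0)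
      * ((if (Equiv.ofBijective l hl).symm j + 1 = 0 then 1 else -1)
          * aa R l ((Equiv.ofBijective l hl).symm j))

lemma NN_mul (hsign : ∀ k j, R k j = -1 ∨ R k j = 1)
    (hRt : R (Fin.last t) = -(R 0))
    (hl : Function.Bijective l)
    (hstep : ∀ (k : Fin t) (j : Fin t), R k.castSucc j ≠ R k.succ j ↔ j = l k) :
    (NN R l hl) * (Matrix.of fun i j : Fin t => R i.castSucc j) = 1 := by
  ext j j'
  rw [Matrix.mul_apply]
  set k := (Equiv.ofBijective l hl).symm j with hkdef
  have hlk : l k = j := (Equiv.ofBijective l hl).apply_symm_apply j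
  set sg : ℝ := if k + 1 = 0 then 1 else -1 with hsg
  have hA : ∑ m, NN R l hl j m * (Matrix.of fun i j : Fin t => R i.castSucc j) m j'
      = aa R l k * R k.castSucc j' + (sg * aa R l k) * R ((k+1) : Fin t).castSucc j' := by
    simp only [NN, Matrix.of_apply, ← hkdef, ← hsg]
    exact sum_helper k (k+1) (aa R l k) (sg * aa R l k) (fun m => R m.castSucc j')
  have hB : sg * R ((k+1) : Fin t).castSucc j' = - R k.succ j' := by
    by_cases h0 : k + 1 = 0
    · rw [hsg]
      rw [if_pos h0, h0, succ_eq_last h0, hRt]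
      simp
    · rw [hsg, if_neg h0, castSucc_add_one h0]; ring
  rw [hA, mul_comm sg (aa R l k), mul_assoc, hB]
  rw [Rstep hsign hstep k j', Matrix.one_apply]
  by_cases hj : j' = l k
  · rw [if_pos hj, if_pos (by rw [hj, hlk])]
    rw [aa, hj]
    have := sq_one hsign k.castSucc (l k)
    field_simp
    linarith [this]
  · rw [if_neg hj, if_neg (by rw [← hlk]; exact fun hh => hj hh.symm)]
    ring
end

section
variable {t : ℕ} [NeZero t] {R : Fin (t + 1) → Fin t → ℝ} {l : Fin t → Fin t}

lemma distinct_lt (hsign : ∀ k j, R k j = -1 ∨ R k j = 1)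
    (hl : Function.Bijective l)
    (hstep : ∀ (k : Fin t) (j : Fin t), R k.castSucc j ≠ R k.succ j ↔ j = l k)
    {i k : Fin t} (hik : i < k) {a b : ℝ}
    (ha : a = 1 ∨ a = -1) (hb : b = 1 ∨ b = -1) :
    a • R i.castSucc ≠ b • R k.castSucc := by
  intro heq
  have h1 := congrFun heq (l i)
  have h2 := congrFun heq (l k)
  simp only [Pi.smul_apply, smul_eq_mul] at h1 h2
  rw [Rflip hsign hl hstep i k hik] at h1
  rw [Rsame hsign hl hstep i k hik] at h2
  have hz1 := Rne_zero hsign i.castSucc (l i)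
  have hz2 := Rne_zero hsign i.castSucc (l k)
  rcases ha with rfl | rfl <;> rcases hb with rfl | rfl <;>
    [ exact hz1 (by linarith) ; exact hz2 (by linarith) ;
      exact hz2 (by linarith) ; exact hz1 (by linarith) ]

lemma distinct (hsign : ∀ k j, R k j = -1 ∨ R k j = 1)
    (hl : Function.Bijective l)
    (hstep : ∀ (k : Fin t) (j : Fin t), R k.castSucc j ≠ R k.succ j ↔ j = l k)
    {i k : Fin t} (hik : i ≠ k) {a b : ℝ}
    (ha : a = 1 ∨ a = -1) (hb : b = 1 ∨ b = -1) :
    a • R i.castSucc ≠ b • R k.castSucc := by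
  rcases lt_or_gt_of_ne hik with h | h
  · exact distinct_lt hsign hl hstep h ha hb
  · exact fun heq => distinct_lt hsign hl hstep h hb ha heq.symm
end

theorem main_lemma (t : ℕ) (ht : 0 < t)
    (R : Fin (t + 1) → Fin t → ℝ)
    (hsign : ∀ k j, R k j = -1 ∨ R k j = 1)
    (hRt : R (Fin.last t) = -(R 0))
    (l : Fin t → Fin t) (hl : Function.Bijective l)
    (hstep : ∀ (k : Fin t) (j : Fin t), R k.castSucc j ≠ R k.succ j ↔ j = l k)
    (x : Fin t → ℝ)
    (hx : x = Matrix.vecMul (fun _ => (1 : ℝ))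
        (Matrix.of fun i j : Fin t => R i.castSucc j)⁻¹)
    (s : Finset (Fin t)) (hs : s = Finset.univ.filter fun i => x i ≠ 0)
    (Q : Finset (Fin t → ℝ)) (hQ : Q = s.image fun i => x i • R i.castSucc) :
    Odd s.card ∧
    (∀ q ∈ Q, (∃ k : Fin t, q = R k.castSucc) ∨ (∃ k : Fin t, q = -(R k.castSucc))) ∧
    Q.card = s.card ∧ (∑ q ∈ Q, q) = (fun _ => (1 : ℝ)) := by
  haveI : NeZero t := ⟨ht.ne'⟩
  set M : Matrix (Fin t) (Fin t) ℝ := Matrix.of fun i j : Fin t => R i.castSucc j with hM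
  have hNM : (NN R l hl) * M = 1 := NN_mul R l hsign hRt hl hstep
  haveI hInv : Invertible M := invertibleOfLeftInverse _ _ hNM
  have hMinv : M⁻¹ = NN R l hl := Matrix.inv_eq_left_inv hNM
  -- closed form of x
  have hsymm : ∀ k : Fin t, (Equiv.ofBijective l hl).symm (l k) = k := fun k =>
    (Equiv.ofBijective l hl).symm_apply_apply k
  have hxx : ∀ j, x j = aa R l j + (if j = 0 then 1 else -1) * aa R l (j - 1) := by
    intro j
    rw [hx, hMinv]
    show ∑ p, (1 : ℝ) * NN R l hl p j = _
    simp only [one_mul]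
    rw [← hl.sum_comp (fun p => NN R l hl p j)]
    have hterm : ∀ k : Fin t, NN R l hl (l k) j
        = (if j = k then (1:ℝ) else 0) * aa R l k
          + (if j = k + 1 then 1 else 0) * ((if k + 1 = 0 then 1 else -1) * aa R l k) := by
      intro k
      simp only [NN, Matrix.of_apply, hsymm]
    simp only [hterm]
    have hcond : ∀ k : Fin t, (j = k + 1) = (k = j - 1) := by
      intro k
      apply propext
      constructor
      · intro h; rw [h]; exact (add_sub_cancel_right k 1).symm
      · intro h; rw [h]; exact (sub_add_cancel j 1).symm
    simp only [hcond]
    rw [Finset.sum_add_distrib]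
    simp only [ite_mul, one_mul, zero_mul, Finset.sum_ite_eq, Finset.sum_ite_eq',
      Finset.mem_univ, if_true]
    rw [sub_add_cancel j 1]
  have haa : ∀ k : Fin t, aa R l k = 1/2 ∨ aa R l k = -(1/2) := by
    intro k
    rcases hsign k.castSucc (l k) with h | h <;> [right; left] <;> rw [aa, h] <;> norm_num
  -- values of x
  have hxval : ∀ j, x j = 0 ∨ x j = 1 ∨ x j = -1 := by
    intro j
    rw [hxx j]
    rcases haa j with h1 | h1 <;> rcases haa (j - 1) with h2 | h2 <;>
      by_cases h0 : j = 0 <;> rw [h1, h2] <;> simp [h0] <;> norm_num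
  -- oddness
  have hodd : Odd s.card := by
    have hprod1 : ∏ j : Fin t, (if x j ≠ 0 then (-1:ℝ) else 1) = (-1)^s.card := by
      rw [hs, Finset.prod_ite]
      simp
    have hprod2 : ∏ j : Fin t, (if x j ≠ 0 then (-1:ℝ) else 1)
        = ∏ j : Fin t, ((if j = 0 then (-1:ℝ) else 1) * ((2 * aa R l j) * (2 * aa R l (j-1)))) := by
      apply Finset.prod_congr rfl
      intro j _
      rcases haa j with h1 | h1 <;> rcases haa (j-1) with h2 | h2 <;> by_cases h0 : j = 0 <;>
        rw [hxx j, h1, h2] <;> simp [h0] <;> norm_num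
    have hprod3 : ∏ j : Fin t,
        ((if j = 0 then (-1:ℝ) else 1) * ((2 * aa R l j) * (2 * aa R l (j-1)))) = -1 := by
      rw [Finset.prod_mul_distrib]
      have e1 : ∏ j : Fin t, (if j = 0 then (-1:ℝ) else 1) = -1 := by
        rw [Finset.prod_ite_eq' Finset.univ (0 : Fin t) (fun _ => (-1:ℝ))]
        simp
      have e2 : ∏ j : Fin t, ((2 * aa R l j) * (2 * aa R l (j-1)))
          = ∏ j : Fin t, ((2 * aa R l j) * (2 * aa R l j)) := by
        rw [Finset.prod_mul_distrib]
        have := Equiv.prod_comp (Equiv.subRight (1 : Fin t)) (fun j => 2 * aa R l j)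
        simp only [Equiv.subRight_apply] at this
        rw [this, ← Finset.prod_mul_distrib]
      have e3 : ∀ j : Fin t, (2 * aa R l j) * (2 * aa R l j) = 1 := by
        intro j; rcases haa j with h | h <;> rw [h] <;> norm_num
      rw [e1, e2, Finset.prod_congr rfl (fun j _ => e3 j), Finset.prod_const_one]
      ring
    have hneg : (-1:ℝ)^s.card = -1 := by rw [← hprod1, hprod2, hprod3]
    rcases Nat.even_or_odd s.card with he | ho
    · rw [he.neg_one_pow] at hneg; norm_num at hneg
    · exact ho
  -- x nonzero values are ±1 on s
  have hxs : ∀ i ∈ s, x i = 1 ∨ x i = -1 := by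
    intro i hi
    have hne : x i ≠ 0 := by rw [hs] at hi; exact (Finset.mem_filter.1 hi).2
    rcases hxval i with h | h | h
    · exact absurd h hne
    · exact Or.inl h
    · exact Or.inr h
  -- injectivity
  have hinj : Set.InjOn (fun i => x i • R i.castSucc) ↑s := by
    intro i hi j hj hij_eq
    by_contra hne
    exact distinct hsign hl hstep hne (hxs i (Finset.mem_coe.1 hi))
      (hxs j (Finset.mem_coe.1 hj)) hij_eq
  have hcard : Q.card = s.card := by rw [hQ]; exact Finset.card_image_of_injOn hinj
  -- membership
  have hmem : ∀ q ∈ Q, (∃ k : Fin t, q = R k.castSucc) ∨ (∃ k : Fin t, q = -(R k.castSucc)) := by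
    intro q hq
    rw [hQ] at hq
    obtain ⟨i, hi, rfl⟩ := Finset.mem_image.1 hq
    rcases hxs i hi with h | h
    · exact Or.inl ⟨i, by rw [h, one_smul]⟩
    · exact Or.inr ⟨i, by rw [h, neg_smul, one_smul]⟩
  -- sum
  have hxM : Matrix.vecMul x M = fun _ => (1:ℝ) := by
    rw [hx, Matrix.vecMul_vecMul, Matrix.nonsing_inv_mul M (Matrix.isUnit_det_of_invertible M),
      Matrix.vecMul_one]
  have hsum : (∑ q ∈ Q, q) = fun _ => (1:ℝ) := by
    rw [hQ, Finset.sum_image (fun i hi j hj h => hinj (Finset.mem_coe.2 hi) (Finset.mem_coe.2 hj) h)]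
    have hfull : ∑ i ∈ s, x i • R i.castSucc = ∑ i : Fin t, x i • R i.castSucc := by
      rw [hs]
      apply Finset.sum_filter_of_ne
      intro i _ hne hx0
      exact hne (by rw [hx0, zero_smul])
    rw [hfull]
    funext j
    rw [Finset.sum_apply]
    have hj := congrFun hxM j
    simp only [Matrix.vecMul, dotProduct, hM, Matrix.of_apply] at hj
    simpa only [Pi.smul_apply, smul_eq_mul] using hj
  exact ⟨hodd, hmem, hcard, hsum⟩

theorem stmt_14 (t : ℕ) (ht : 0 < t)
    (R : Fin (t + 1) → Fin t → ℝ)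
    (hsign : ∀ k j, R k j = -1 ∨ R k j = 1)
    (hRt : R (Fin.last t) = -(R 0))
    (l : Fin t → Fin t) (hl : Function.Bijective l)
    (hstep : ∀ (k : Fin t) (j : Fin t), R k.castSucc j ≠ R k.succ j ↔ j = l k)
    (V : Finset (Fin t → ℝ))
    (hV : V = (Finset.univ.image fun k : Fin t => R k.castSucc)
        ∪ (Finset.univ.image fun k : Fin t => -(R k.castSucc)))
    (x : Fin t → ℝ)
    (hx : x = Matrix.vecMul (fun _ => (1 : ℝ))
        (Matrix.of fun i j : Fin t => R i.castSucc j)⁻¹)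
    (s : Finset (Fin t)) (hs : s = Finset.univ.filter fun i => x i ≠ 0)
    (Q : Finset (Fin t → ℝ)) (hQ : Q = s.image fun i => x i • R i.castSucc) :
    Odd s.card ∧ Q ⊆ V ∧ Q.card = s.card ∧ (∑ q ∈ Q, q) = (fun _ => (1 : ℝ)) ∧
    ∀ T : Fin t → ℝ, (∀ j, T j = -1 ∨ T j = 1) →
      ∃ S : Finset (Fin t → ℝ), S ⊆ V ∧ Odd S.card ∧ (∑ q ∈ S, q) = T := by
  obtain ⟨hodd, hmem, hcard, hsum⟩ :=
    main_lemma t ht R hsign hRt l hl hstep x hx s hs Q hQ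
  have hsubV : ∀ (q : Fin t → ℝ),
      ((∃ k : Fin t, q = R k.castSucc) ∨ (∃ k : Fin t, q = -(R k.castSucc))) → q ∈ V := by
    intro q hq
    rw [hV, Finset.mem_union]
    rcases hq with ⟨k, rfl⟩ | ⟨k, rfl⟩
    · exact Or.inl (Finset.mem_image.2 ⟨k, Finset.mem_univ k, rfl⟩)
    · exact Or.inr (Finset.mem_image.2 ⟨k, Finset.mem_univ k, rfl⟩)
  refine ⟨hodd, fun q hq => hsubV q (hmem q hq), hcard, hsum, ?_⟩
  intro T hT
  have hT0 : ∀ j, T j ≠ 0 := by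
    intro j; rcases hT j with h | h <;> rw [h] <;> norm_num
  set R' : Fin (t + 1) → Fin t → ℝ := fun k j => T j * R k j with hR'
  have hsign' : ∀ k j, R' k j = -1 ∨ R' k j = 1 := by
    intro k j
    rcases hT j with h1 | h1 <;> rcases hsign k j with h2 | h2 <;>
      simp [hR', h1, h2]
  have hRt' : R' (Fin.last t) = -(R' 0) := by
    funext j
    have := congrFun hRt j
    simp only [hR', Pi.neg_apply] at this ⊢
    rw [this]; ring
  have hstep' : ∀ (k : Fin t) (j : Fin t), R' k.castSucc j ≠ R' k.succ j ↔ j = l k := by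
    intro k j
    rw [← hstep k j]
    constructor
    · intro h hc; exact h (by rw [hR']; simp only []; rw [hc])
    · intro h hc; exact h (mul_left_cancel₀ (hT0 j) hc)
  obtain ⟨hodd', hmem', hcard', hsum'⟩ :=
    main_lemma t ht R' hsign' hRt' l hl hstep'
      (Matrix.vecMul (fun _ => (1 : ℝ)) (Matrix.of fun i j : Fin t => R' i.castSucc j)⁻¹) rfl
      (Finset.univ.filter fun i =>
        Matrix.vecMul (fun _ => (1 : ℝ)) (Matrix.of fun i j : Fin t => R' i.castSucc j)⁻¹ i ≠ 0) rfl
      _ rfl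
  set Q' := ((Finset.univ.filter fun i =>
      Matrix.vecMul (fun _ => (1 : ℝ)) (Matrix.of fun i j : Fin t => R' i.castSucc j)⁻¹ i ≠ 0).image
      fun i => Matrix.vecMul (fun _ => (1 : ℝ)) (Matrix.of fun i j : Fin t => R' i.castSucc j)⁻¹ i
        • R' i.castSucc) with hQ'
  have hTinj : Function.Injective (fun (q : Fin t → ℝ) => fun j => T j * q j) := by
    intro q1 q2 h
    funext j
    exact mul_left_cancel₀ (hT0 j) (congrFun h j)
  refine ⟨Q'.image (fun q => fun j => T j * q j), ?_, ?_, ?_⟩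
  · intro q hq
    obtain ⟨p, hp, rfl⟩ := Finset.mem_image.1 hq
    apply hsubV
    rcases hmem' p hp with ⟨k, rfl⟩ | ⟨k, rfl⟩
    · left; exact ⟨k, by funext j; simp only [hR']; rcases hT j with h | h <;> rw [h] <;> ring⟩
    · right
      refine ⟨k, ?_⟩
      funext j
      simp only [hR', Pi.neg_apply]
      rcases hT j with h | h <;> rw [h] <;> ring
  · rw [Finset.card_image_of_injective _ hTinj, hcard']
    exact hodd'
  · rw [Finset.sum_image (fun a _ b _ h => hTinj h)]
    funext j
    rw [Finset.sum_apply]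
    have hj := congrFun hsum' j
    rw [Finset.sum_apply] at hj
    show ∑ q ∈ Q', T j * q j = T j
    rw [← Finset.mul_sum, hj, mul_one]
end
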